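/- Let φ be the standard normal density. For every u' > 0, set ξ₀ = π·(1 ∨ u')^{-3/2}/24 (where 1 ∨ u' = max(1, u')). Then for all u ∈ [0, u'] and all ξ ∈ [0, ξ₀], ∫_ℝ e^{-u cos(ξv)} cos(u sin(ξv) - 2ξv) φ(v) dv > 0. -/
import Mathlib

set_option maxHeartbeats 1000000

open Set MeasureTheory

/-- The standard normal density. -/
noncomputable def stdNormalDens (v : ℝ) : ℝ :=
  (Real.sqrt (2 * Real.pi))⁻¹ * Real.exp (-v ^ 2 / 2)

lemma stdNormalDens_pos (v : ℝ) : 0 < stdNormalDens v := by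
  unfold stdNormalDens
  positivity

lemma stdNormalDens_cont : Continuous stdNormalDens := by
  unfold stdNormalDens
  fun_prop

lemma stdNormalDens_integrable : Integrable stdNormalDens := by
  have h : stdNormalDens = fun v => (Real.sqrt (2 * Real.pi))⁻¹ *
      Real.exp (-(1/2 : ℝ) * v ^ 2) := by
    funext v; unfold stdNormalDens; congr 1; ring_nf
  rw [h]
  exact (integrable_exp_neg_mul_sq (by norm_num)).const_mul _

lemma stdNormalDens_integral : ∫ v : ℝ, stdNormalDens v = 1 := by
  have h : (fun v : ℝ => stdNormalDens v) = fun v => (Real.sqrt (2 * Real.pi))⁻¹ *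
      Real.exp (-(1/2 : ℝ) * v ^ 2) := by
    funext v; unfold stdNormalDens; congr 1; ring_nf
  rw [h, MeasureTheory.integral_const_mul, integral_gaussian]
  rw [show Real.pi / (1/2 : ℝ) = 2 * Real.pi by ring]
  rw [inv_mul_cancel₀]
  exact (Real.sqrt_pos.2 (by positivity)).ne'

theorem stmt_10 (u' : ℝ) (hu' : 0 < u') (u ξ : ℝ)
    (hu : u ∈ Icc 0 u')
    (hξ : ξ ∈ Icc 0 (Real.pi * (max 1 u') ^ (-(3/2) : ℝ) / 24)) :
    0 < ∫ v : ℝ, Real.exp (-(u * Real.cos (ξ * v))) *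
        Real.cos (u * Real.sin (ξ * v) - 2 * ξ * v) * stdNormalDens v := by
  obtain ⟨hu0, huu'⟩ := hu
  obtain ⟨hξ0, hξ1⟩ := hξ
  set M := max 1 u' with hMdef
  clear_value M
  have hM1 : (1:ℝ) ≤ M := hMdef ▸ le_max_left _ _
  have hu'M : u' ≤ M := hMdef ▸ le_max_right _ _
  have hMpos : (0:ℝ) < M := lt_of_lt_of_le one_pos hM1
  have hπ : Real.pi ≤ 3.15 := le_of_lt Real.pi_lt_d2
  have hπ3 : (3:ℝ) ≤ Real.pi := le_of_lt Real.pi_gt_three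
  have hπ0 : (0:ℝ) < Real.pi := Real.pi_pos
  set a := u * ξ ^ 2 / 2 with ha_def
  clear_value a
  have ha0 : 0 ≤ a := by rw [ha_def]; positivity
  -- a ≤ 1/100
  have hsq : (M ^ (-(3/2) : ℝ)) ^ 2 = M ^ (-(3:ℝ)) := by
    rw [← Real.rpow_natCast (M ^ (-(3/2) : ℝ)) 2, ← Real.rpow_mul hMpos.le]
    norm_num
  have hMM3 : M * M ^ (-(3:ℝ)) ≤ 1 := by
    have : M * M ^ (-(3:ℝ)) = M ^ ((-2:ℝ)) := by
      rw [show M * M ^ (-(3:ℝ)) = M ^ (1:ℝ) * M ^ (-(3:ℝ)) by rw [Real.rpow_one],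
        ← Real.rpow_add hMpos]
      norm_num
    rw [this]
    exact Real.rpow_le_one_of_one_le_of_nonpos hM1 (by norm_num)
  have hMrpow_pos : (0:ℝ) < M ^ (-(3/2) : ℝ) := Real.rpow_pos_of_pos hMpos _
  have key1 : u * ξ ^ 2 ≤ Real.pi ^ 2 / 576 := by
    have hξsq : ξ ^ 2 ≤ (Real.pi * M ^ (-(3/2) : ℝ) / 24) ^ 2 := by
      apply pow_le_pow_left₀ hξ0 hξ1
    have h2 : (Real.pi * M ^ (-(3/2) : ℝ) / 24) ^ 2
        = Real.pi ^ 2 / 576 * M ^ (-(3:ℝ)) := by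
      rw [div_pow, mul_pow, hsq]; ring
    have huM : u ≤ M := le_trans huu' hu'M
    have hM3pos : (0:ℝ) < M ^ (-(3:ℝ)) := Real.rpow_pos_of_pos hMpos _
    calc u * ξ ^ 2 ≤ M * (Real.pi ^ 2 / 576 * M ^ (-(3:ℝ))) := by
          rw [← h2]; exact mul_le_mul huM hξsq (sq_nonneg _) hMpos.le
      _ = Real.pi ^ 2 / 576 * (M * M ^ (-(3:ℝ))) := by ring
      _ ≤ Real.pi ^ 2 / 576 * 1 := by
          apply mul_le_mul_of_nonneg_left hMM3 (by positivity)
      _ = Real.pi ^ 2 / 576 := by ring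
  have ha : a ≤ 1/100 := by
    rw [ha_def]; nlinarith [key1]
  -- c ≤ π/8
  have hc : (u + 2) * ξ ≤ Real.pi / 8 := by
    have h32 : M ^ (-(3/2) : ℝ) ≤ M⁻¹ := by
      rw [← Real.rpow_neg_one M]
      exact Real.rpow_le_rpow_of_exponent_le hM1 (by norm_num)
    have hξ' : ξ ≤ Real.pi * M⁻¹ / 24 := by
      refine le_trans hξ1 ?_
      apply div_le_div_of_nonneg_right (mul_le_mul_of_nonneg_left h32 hπ0.le) (by norm_num)
    have hu2 : u + 2 ≤ 3 * M := by
      have : u ≤ M := le_trans huu' hu'M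
      nlinarith [hM1]
    calc (u + 2) * ξ ≤ (3 * M) * (Real.pi * M⁻¹ / 24) := by
          apply mul_le_mul hu2 hξ' hξ0 (by positivity)
      _ = Real.pi / 8 * (M * M⁻¹) := by ring
      _ = Real.pi / 8 := by rw [mul_inv_cancel₀ hMpos.ne']; ring
  have hc2 : ((u + 2) * ξ) ^ 2 ≤ Real.pi ^ 2 / 64 := by
    have h0 : 0 ≤ (u + 2) * ξ := by positivity
    nlinarith [hc]
  set w := Real.pi ^ 2 / 128 with hw_def
  clear_value w
  have hw0 : 0 ≤ w := by rw [hw_def]; positivity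
  -- the minorant
  set m : ℝ → ℝ := fun v => Real.exp (-u) *
      ((1 - w * Real.exp (a * v ^ 2) * v ^ 2) * stdNormalDens v) with hm_def
  clear_value m
  -- pointwise bound
  have hpt : ∀ v : ℝ, m v ≤ Real.exp (-(u * Real.cos (ξ * v))) *
      Real.cos (u * Real.sin (ξ * v) - 2 * ξ * v) * stdNormalDens v := by
    intro v
    set A := u * Real.sin (ξ * v) - 2 * ξ * v with hA_def
    clear_value A
    have hEeq : Real.exp (-(u * Real.cos (ξ * v)))
        = Real.exp (-u) * Real.exp (u * (1 - Real.cos (ξ * v))) := by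
      rw [← Real.exp_add]; congr 1; ring
    have hE1 : 1 ≤ Real.exp (u * (1 - Real.cos (ξ * v))) := by
      apply Real.one_le_exp
      have := Real.cos_le_one (ξ * v)
      nlinarith
    have hE2 : Real.exp (u * (1 - Real.cos (ξ * v))) ≤ Real.exp (a * v ^ 2) := by
      apply Real.exp_le_exp.2
      have h1 : 1 - Real.cos (ξ * v) ≤ (ξ * v) ^ 2 / 2 := by
        nlinarith [Real.one_sub_sq_div_two_le_cos (x := ξ * v)]
      calc u * (1 - Real.cos (ξ * v)) ≤ u * ((ξ * v) ^ 2 / 2) := by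
            apply mul_le_mul_of_nonneg_left h1 hu0
        _ = a * v ^ 2 := by rw [ha_def]; ring
    have hAabs : |A| ≤ ((u + 2) * ξ) * |v| := by
      rw [hA_def]
      calc |u * Real.sin (ξ * v) - 2 * ξ * v|
          ≤ |u * Real.sin (ξ * v)| + |2 * ξ * v| := abs_sub _ _
        _ = u * |Real.sin (ξ * v)| + 2 * ξ * |v| := by
            rw [abs_mul, abs_mul, abs_mul, abs_of_nonneg hu0]
            norm_num [abs_of_nonneg hξ0]
        _ ≤ u * |ξ * v| + 2 * ξ * |v| := by
            have hs := Real.abs_sin_le_abs (x := ξ * v)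
            have := mul_le_mul_of_nonneg_left hs hu0
            linarith
        _ = ((u + 2) * ξ) * |v| := by
            rw [abs_mul, abs_of_nonneg hξ0]; ring
    have hcosA : 1 - w * v ^ 2 ≤ Real.cos A := by
      have h1 : 1 - A ^ 2 / 2 ≤ Real.cos A := Real.one_sub_sq_div_two_le_cos
      have h2 : A ^ 2 ≤ (((u + 2) * ξ) * |v|) ^ 2 := by
        rw [← sq_abs A]
        exact pow_le_pow_left₀ (abs_nonneg _) hAabs 2
      have h3 : (((u + 2) * ξ) * |v|) ^ 2 = ((u + 2) * ξ) ^ 2 * v ^ 2 := by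
        rw [mul_pow, sq_abs]
      have hc2' : ((u + 2) * ξ) ^ 2 ≤ 2 * w := by rw [hw_def]; linarith
      have h4 : A ^ 2 ≤ 2 * w * v ^ 2 := by
        have h5 := mul_le_mul_of_nonneg_right hc2' (sq_nonneg v)
        rw [h3] at h2
        linarith
      linarith
    -- combine
    have hφ0 : 0 ≤ stdNormalDens v := (stdNormalDens_pos v).le
    rw [hm_def, hEeq]
    simp only
    have hexpa1 : 1 ≤ Real.exp (a * v ^ 2) := Real.one_le_exp (by positivity)
    have key : 1 - w * Real.exp (a * v ^ 2) * v ^ 2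
        ≤ Real.exp (u * (1 - Real.cos (ξ * v))) * Real.cos A := by
      have hws : 0 ≤ w * (Real.exp (a * v ^ 2) - 1) * v ^ 2 :=
        mul_nonneg (mul_nonneg hw0 (by linarith)) (sq_nonneg v)
      rcases le_or_gt 0 (Real.cos A) with hpos | hneg
      · have h5 : Real.cos A ≤ Real.exp (u * (1 - Real.cos (ξ * v))) * Real.cos A := by
          nlinarith
        nlinarith [hws, hcosA]
      · have h4 : Real.exp (a * v ^ 2) * Real.cos A
            ≤ Real.exp (u * (1 - Real.cos (ξ * v))) * Real.cos A :=
          mul_le_mul_of_nonpos_right hE2 hneg.le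
        have h6 : Real.exp (a * v ^ 2) * (1 - w * v ^ 2)
            ≤ Real.exp (a * v ^ 2) * Real.cos A :=
          mul_le_mul_of_nonneg_left hcosA (Real.exp_nonneg _)
        nlinarith [hws, hexpa1]
    calc Real.exp (-u) * ((1 - w * Real.exp (a * v ^ 2) * v ^ 2) * stdNormalDens v)
        ≤ Real.exp (-u) * ((Real.exp (u * (1 - Real.cos (ξ * v))) * Real.cos A)
            * stdNormalDens v) := by
          apply mul_le_mul_of_nonneg_left _ (Real.exp_nonneg _)
          exact mul_le_mul_of_nonneg_right key hφ0
      _ = Real.exp (-u) * Real.exp (u * (1 - Real.cos (ξ * v))) * Real.cos A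
            * stdNormalDens v := by ring
  -- integrability of f
  have hfcont : Continuous (fun v : ℝ => Real.exp (-(u * Real.cos (ξ * v))) *
      Real.cos (u * Real.sin (ξ * v) - 2 * ξ * v) * stdNormalDens v) := by
    have := stdNormalDens_cont
    fun_prop
  have hfint : Integrable (fun v : ℝ => Real.exp (-(u * Real.cos (ξ * v))) *
      Real.cos (u * Real.sin (ξ * v) - 2 * ξ * v) * stdNormalDens v) := by
    apply Integrable.mono' (stdNormalDens_integrable.const_mul (Real.exp u))
      hfcont.aestronglyMeasurable
    filter_upwards with v
    have hφ0 : 0 ≤ stdNormalDens v := (stdNormalDens_pos v).le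
    have h1 : Real.exp (-(u * Real.cos (ξ * v))) ≤ Real.exp u := by
      apply Real.exp_le_exp.2
      nlinarith [Real.neg_one_le_cos (ξ * v), Real.cos_le_one (ξ * v)]
    have h2 : |Real.cos (u * Real.sin (ξ * v) - 2 * ξ * v)| ≤ 1 :=
      Real.abs_cos_le_one _
    rw [Real.norm_eq_abs, abs_mul, abs_mul, abs_of_nonneg (Real.exp_nonneg _),
      abs_of_nonneg hφ0]
    have h3 : Real.exp (-(u * Real.cos (ξ * v))) *
        |Real.cos (u * Real.sin (ξ * v) - 2 * ξ * v)| ≤ Real.exp u * 1 :=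
      mul_le_mul h1 h2 (abs_nonneg _) (Real.exp_nonneg _)
    have h4 := mul_le_mul_of_nonneg_right h3 hφ0
    linarith
  -- integrability of h := exp(a v²) v² φ v
  have hba : (0:ℝ) < 1/4 - a := by linarith
  set h : ℝ → ℝ := fun v => Real.exp (a * v ^ 2) * v ^ 2 * stdNormalDens v with hh_def
  clear_value h
  have hh_eq : ∀ v, h v = (Real.sqrt (2 * Real.pi))⁻¹ *
      (v ^ 2 * Real.exp (a * v ^ 2 - v ^ 2 / 2)) := by
    intro v
    have e1 : Real.exp (a * v ^ 2) * Real.exp (-v ^ 2 / 2)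
        = Real.exp (a * v ^ 2 - v ^ 2 / 2) := by
      rw [← Real.exp_add]; ring_nf
    rw [hh_def]
    simp only [stdNormalDens]
    rw [← e1]
    ring
  have hhbound : ∀ v : ℝ, h v ≤ (Real.sqrt (2 * Real.pi))⁻¹ *
      (4 * Real.exp (-(1/4 - a) * v ^ 2)) := by
    intro v
    rw [hh_eq v]
    apply mul_le_mul_of_nonneg_left _ (by positivity)
    have hv4 : v ^ 2 ≤ 4 * Real.exp (v ^ 2 / 4) := by
      have := Real.add_one_le_exp (v ^ 2 / 4)
      nlinarith
    calc v ^ 2 * Real.exp (a * v ^ 2 - v ^ 2 / 2)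
        ≤ (4 * Real.exp (v ^ 2 / 4)) * Real.exp (a * v ^ 2 - v ^ 2 / 2) := by
          apply mul_le_mul_of_nonneg_right hv4 (Real.exp_nonneg _)
      _ = 4 * Real.exp (-(1/4 - a) * v ^ 2) := by
          rw [mul_assoc, ← Real.exp_add]; congr 2; ring
    done
  have hBint : Integrable (fun v : ℝ => (Real.sqrt (2 * Real.pi))⁻¹ *
      (4 * Real.exp (-(1/4 - a) * v ^ 2))) := by
    exact ((integrable_exp_neg_mul_sq hba).const_mul 4).const_mul _
  have hhcont : Continuous h := by
    rw [hh_def]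
    have := stdNormalDens_cont
    fun_prop
  have hh0 : ∀ v, 0 ≤ h v := by
    intro v
    rw [hh_def]
    have := (stdNormalDens_pos v).le
    positivity
  have hhint : Integrable h := by
    apply Integrable.mono' hBint hhcont.aestronglyMeasurable
    filter_upwards with v
    rw [Real.norm_eq_abs, abs_of_nonneg (hh0 v)]
    exact hhbound v
  -- bound ∫ h
  have hIB : ∫ v : ℝ, (Real.sqrt (2 * Real.pi))⁻¹ *
      (4 * Real.exp (-(1/4 - a) * v ^ 2))
      = (Real.sqrt (2 * Real.pi))⁻¹ * (4 * Real.sqrt (Real.pi / (1/4 - a))) := by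
    rw [MeasureTheory.integral_const_mul, MeasureTheory.integral_const_mul,
      integral_gaussian]
  have hIh_le : ∫ v, h v ≤ (Real.sqrt (2 * Real.pi))⁻¹ *
      (4 * Real.sqrt (Real.pi / (1/4 - a))) := by
    rw [← hIB]
    exact integral_mono hhint hBint hhbound
  -- numeric bound : w * (that) < 1
  have hs1 : Real.sqrt (Real.pi / (1/4 - a)) ≤ 4 := by
    have h16 : Real.pi / (1/4 - a) ≤ 16 := by
      rw [div_le_iff₀ hba]
      nlinarith
    calc Real.sqrt (Real.pi / (1/4 - a)) ≤ Real.sqrt 16 := Real.sqrt_le_sqrt h16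
      _ = 4 := by
          rw [show (16:ℝ) = 4 ^ 2 by norm_num, Real.sqrt_sq (by norm_num : (0:ℝ) ≤ 4)]
  have hs2 : (2.4:ℝ) ≤ Real.sqrt (2 * Real.pi) := by
    rw [show (2.4:ℝ) = Real.sqrt (2.4 ^ 2) by
      rw [Real.sqrt_sq (by norm_num : (0:ℝ) ≤ 2.4)]]
    apply Real.sqrt_le_sqrt
    nlinarith
  have hsqrtpos : (0:ℝ) < Real.sqrt (2 * Real.pi) := by positivity
  have hnum : w * ((Real.sqrt (2 * Real.pi))⁻¹ *
      (4 * Real.sqrt (Real.pi / (1/4 - a)))) < 1 := by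
    have hinv : (Real.sqrt (2 * Real.pi))⁻¹ ≤ (2.4:ℝ)⁻¹ := by
      apply inv_anti₀ (by norm_num) hs2
    have hsq0 : 0 ≤ Real.sqrt (Real.pi / (1/4 - a)) := Real.sqrt_nonneg _
    have hw10 : w ≤ 10 / 128 := by
      rw [hw_def]
      nlinarith
    calc w * ((Real.sqrt (2 * Real.pi))⁻¹ * (4 * Real.sqrt (Real.pi / (1/4 - a))))
        ≤ (10/128) * ((2.4:ℝ)⁻¹ * (4 * 4)) := by
          apply mul_le_mul hw10 _ (by positivity) (by norm_num)
          apply mul_le_mul hinv _ (by positivity) (by norm_num)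
          nlinarith
      _ < 1 := by norm_num
  -- integral of m
  have hinner_int : Integrable (fun v : ℝ =>
      (1 - w * Real.exp (a * v ^ 2) * v ^ 2) * stdNormalDens v) := by
    have heq : (fun v : ℝ => (1 - w * Real.exp (a * v ^ 2) * v ^ 2) * stdNormalDens v)
        = fun v => stdNormalDens v - w * h v := by
      funext v; rw [hh_def]; ring
    rw [heq]
    exact stdNormalDens_integrable.sub (hhint.const_mul w)
  have hmint : Integrable m := by
    rw [hm_def]
    exact hinner_int.const_mul _
  have hIm : ∫ v, m v = Real.exp (-u) * (1 - w * ∫ v, h v) := by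
    rw [hm_def]
    rw [MeasureTheory.integral_const_mul]
    congr 1
    have heq : (fun v : ℝ => (1 - w * Real.exp (a * v ^ 2) * v ^ 2) * stdNormalDens v)
        = fun v => stdNormalDens v - w * h v := by
      funext v; rw [hh_def]; ring
    rw [heq, integral_sub stdNormalDens_integrable (hhint.const_mul w),
      MeasureTheory.integral_const_mul, stdNormalDens_integral]
  have hImpos : 0 < ∫ v, m v := by
    rw [hIm]
    apply mul_pos (Real.exp_pos _)
    have : w * ∫ v, h v < 1 := by
      calc w * ∫ v, h v ≤ w * ((Real.sqrt (2 * Real.pi))⁻¹ *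
          (4 * Real.sqrt (Real.pi / (1/4 - a)))) := by
            apply mul_le_mul_of_nonneg_left hIh_le hw0
        _ < 1 := hnum
    linarith
  calc (0:ℝ) < ∫ v, m v := hImpos
    _ ≤ _ := integral_mono hmint hfint hpt
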